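/- If an orthonormal basis {v₁, v₂, v₃, v₄} of ℂ²⊗ℂ² is such that v₁, v₂, v₃ are product vectors, then v₄ is also a product vector. Equivalently, no orthonormal basis of ℂ²⊗ℂ² contains exactly one entangled (non-product) vector. -/

import Mathlib

noncomputable section

open scoped ComplexOrder

/-- The two-qubit Hilbert space ℂ² ⊗ ℂ², modeled as ℂ^(2×2) with the standard inner ℂ product. -/
abbrev TwoQubit : Type := EuclideanSpace ℂ (Fin 2 × Fin 2)

/-- The computational basis vector |ab⟩. -/
def ket (a b : Fin 2) : TwoQubit := EuclideanSpace.single (a, b) 1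

/-- A vector is a product vector if it is of the form u ⊗ w. -/
def IsProductVec (v : TwoQubit) : Prop :=
  ∃ u w : Fin 2 → ℂ, ∀ a b : Fin 2, v (a, b) = u a * w b

/-- The 2×2 coefficient matrix of a vector in ℂ² ⊗ ℂ². -/
def coeffMat (v : TwoQubit) : Matrix (Fin 2) (Fin 2) ℂ :=
  Matrix.of fun a b => v (a, b)

open Complex

local notation "conj'" => starRingEnd ℂ

/-- The "spin flip" antilinear map, encoded as a plain function. -/
def Jmap (x : TwoQubit) : TwoQubit := WithLp.toLp 2 (fun p : Fin 2 × Fin 2 =>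
  ![![conj' (x (1,1)), -conj' (x (1,0))], ![-conj' (x (0,1)), conj' (x (0,0))]] p.1 p.2)

lemma inner_expand (x y : TwoQubit) :
    (inner ℂ x y : ℂ) = conj' (x (0,0)) * y (0,0) + conj' (x (0,1)) * y (0,1)
      + conj' (x (1,0)) * y (1,0) + conj' (x (1,1)) * y (1,1) := by
  simp only [PiLp.inner_apply, RCLike.inner_apply, Fintype.sum_prod_type, Fin.sum_univ_two]
  ring

lemma Jmap_apply (x : TwoQubit) :
    Jmap x (0,0) = conj' (x (1,1)) ∧ Jmap x (0,1) = -conj' (x (1,0))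
      ∧ Jmap x (1,0) = -conj' (x (0,1)) ∧ Jmap x (1,1) = conj' (x (0,0)) := by
  refine ⟨rfl, rfl, rfl, rfl⟩

lemma inner_J_left (x y : TwoQubit) :
    (inner ℂ (Jmap x) y : ℂ) = x (1,1) * y (0,0) - x (1,0) * y (0,1)
      - x (0,1) * y (1,0) + x (0,0) * y (1,1) := by
  rw [inner_expand]
  obtain ⟨e1, e2, e3, e4⟩ := Jmap_apply x
  rw [e1, e2, e3, e4]
  simp only [map_neg, RingHom.id_apply, Complex.conj_conj, starRingEnd_self_apply]
  ring

lemma inner_J_J (x y : TwoQubit) :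
    (inner ℂ (Jmap x) (Jmap y) : ℂ) = inner ℂ y x := by
  rw [inner_expand, inner_expand]
  obtain ⟨e1, e2, e3, e4⟩ := Jmap_apply x
  obtain ⟨f1, f2, f3, f4⟩ := Jmap_apply y
  rw [e1, e2, e3, e4, f1, f2, f3, f4]
  simp only [map_neg, Complex.conj_conj]
  ring

lemma J_symm (x y : TwoQubit) : (inner ℂ (Jmap x) y : ℂ) = inner ℂ (Jmap y) x := by
  rw [inner_J_left, inner_J_left]; ring

/-- A vector whose coefficient matrix has vanishing determinant is a product vector. -/
lemma isProductVec_of_det (x : TwoQubit)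
    (h : x (0,0) * x (1,1) = x (0,1) * x (1,0)) : IsProductVec x := by
  by_cases h00 : x (0,0) = 0
  · by_cases h01 : x (0,1) = 0
    · refine ⟨![0, 1], ![x (1,0), x (1,1)], fun a b => ?_⟩
      fin_cases a <;> fin_cases b <;>
        simp [h00, h01, ← Prod.mk_zero_zero, Prod.mk.injEq]
    · have h10 : x (1,0) = 0 := by
        have : x (0,1) * x (1,0) = 0 := by rw [← h, h00, zero_mul]
        rcases mul_eq_zero.mp this with hc | hc
        · exact absurd hc h01
        · exact hc
      refine ⟨![x (0,1), x (1,1)], ![0, 1], fun a b => ?_⟩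
      fin_cases a <;> fin_cases b <;>
        simp [h00, h10, ← Prod.mk_zero_zero, Prod.mk.injEq]
  · refine ⟨![x (0,0), x (1,0)], ![1, x (0,1) / x (0,0)], fun a b => ?_⟩
    fin_cases a <;> fin_cases b
    · show x (0,0) = ![x (0,0), x (1,0)] 0 * ![1, x (0,1) / x (0,0)] 0
      simp
    · show x (0,1) = ![x (0,0), x (1,0)] 0 * ![1, x (0,1) / x (0,0)] 1
      simp only [Matrix.cons_val_zero, Matrix.cons_val_one, Matrix.head_cons]
      rw [mul_comm, div_mul_cancel₀ _ h00]
    · show x (1,0) = ![x (0,0), x (1,0)] 1 * ![1, x (0,1) / x (0,0)] 0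
      simp
    · show x (1,1) = ![x (0,0), x (1,0)] 1 * ![1, x (0,1) / x (0,0)] 1
      simp only [Matrix.cons_val_one, Matrix.head_cons, Matrix.cons_val_zero]
      rw [mul_div_assoc', eq_div_iff h00]
      linear_combination h

/-- Key algebraic fact: if a symmetric unitary 4×4 matrix with rows
`(0,a,b,c), (a,0,d,e), (b,d,0,f), (c,e,f,g)` exists, then `g = 0`. -/
lemma key_alg (a b c d e f g : ℂ)
    (h00 : a * conj' a + b * conj' b + c * conj' c = 1)
    (h01 : b * conj' d + c * conj' e = 0)
    (h02 : a * conj' d + c * conj' f = 0)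
    (h03 : a * conj' e + b * conj' f + c * conj' g = 0)
    (h11 : a * conj' a + d * conj' d + e * conj' e = 1)
    (h12 : a * conj' b + e * conj' f = 0)
    (h13 : a * conj' c + d * conj' f + e * conj' g = 0)
    (h22 : b * conj' b + d * conj' d + f * conj' f = 1)
    (h23 : b * conj' c + d * conj' e + f * conj' g = 0)
    (h33 : c * conj' c + e * conj' e + f * conj' f + g * conj' g = 1) :
    g = 0 := by
  -- real (normSq) versions of the diagonal equations
  have cast_eq : ∀ p q r : ℂ, p * conj' p + q * conj' q + r * conj' r = 1 →
      Complex.normSq p + Complex.normSq q + Complex.normSq r = 1 := by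
    intro p q r hpqr
    rw [Complex.mul_conj, Complex.mul_conj, Complex.mul_conj] at hpqr
    exact_mod_cast hpqr
  have r00 := cast_eq _ _ _ h00
  have r11 := cast_eq _ _ _ h11
  have r22 := cast_eq _ _ _ h22
  have r33 : Complex.normSq c + Complex.normSq e + Complex.normSq f
      + Complex.normSq g = 1 := by
    rw [Complex.mul_conj, Complex.mul_conj, Complex.mul_conj, Complex.mul_conj] at h33
    exact_mod_cast h33
  -- magnitude relations from off-diagonal orthogonality
  have mag : ∀ p q r s : ℂ, p * conj' q + r * conj' s = 0 →
      Complex.normSq p * Complex.normSq q = Complex.normSq r * Complex.normSq s := by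
    intro p q r s hpq
    have : p * conj' q = -(r * conj' s) := by linear_combination hpq
    have := congrArg Complex.normSq this
    simpa [Complex.normSq_mul, Complex.normSq_conj] using this
  have mBD := mag _ _ _ _ h01   -- B*D = C*E
  have mAD := mag _ _ _ _ h02   -- A*D = C*F
  have mAB := mag _ _ _ _ h12   -- A*B = E*F
  have nn := Complex.normSq_nonneg
  by_cases ha : a = 0
  · by_cases hf : f = 0
    · by_cases hg : g = 0
      · exact hg
      · exfalso
        have hc : c = 0 := by
          have : c * conj' g = 0 := by
            simpa [ha, hf] using h03
          rcases mul_eq_zero.mp this with h' | h'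
          · exact h'
          · exact absurd (by simpa using h') hg
        have he : e = 0 := by
          have : e * conj' g = 0 := by
            simpa [ha, hf, hc] using h13
          rcases mul_eq_zero.mp this with h' | h'
          · exact h'
          · exact absurd (by simpa using h') hg
        rw [ha, hc] at r00
        rw [ha, he] at r11
        rw [hf] at r22
        simp only [Complex.normSq_zero, add_zero, zero_add] at r00 r11 r22
        nlinarith [r00, r11, r22, nn b, nn d]
    · exfalso
      have hc : c = 0 := by
        have : c * conj' f = 0 := by simpa [ha] using h02
        rcases mul_eq_zero.mp this with h' | h'
        · exact h'
        · exact absurd (by simpa using h') hf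
      have he : e = 0 := by
        have : e * conj' f = 0 := by simpa [ha] using h12
        rcases mul_eq_zero.mp this with h' | h'
        · exact h'
        · exact absurd (by simpa using h') hf
      rw [ha, hc] at r00
      rw [ha, he] at r11
      simp only [Complex.normSq_zero, add_zero, zero_add] at r00 r11
      nlinarith [r00, r11, r22, nn f]
  · by_cases hf : f = 0
    · exfalso
      have hd : d = 0 := by
        have : a * conj' d = 0 := by simpa [hf] using h02
        rcases mul_eq_zero.mp this with h' | h'
        · exact absurd h' ha
        · simpa using h'
      have hb : b = 0 := by
        have : a * conj' b = 0 := by simpa [hf] using h12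
        rcases mul_eq_zero.mp this with h' | h'
        · exact absurd h' ha
        · simpa using h'
      rw [hb, hd, hf] at r22
      simp only [Complex.normSq_zero, add_zero, zero_add] at r22
      norm_num at r22
    · by_cases hb : b = 0
      · have he : e = 0 := by
          have : e * conj' f = 0 := by simpa [hb] using h12
          rcases mul_eq_zero.mp this with h' | h'
          · exact h'
          · exact absurd (by simpa using h') hf
        have : f * conj' g = 0 := by simpa [hb, he] using h23
        rcases mul_eq_zero.mp this with h' | h'
        · exact absurd h' hf
        · simpa using h'
      · by_cases hc : c = 0
        · have hd : d = 0 := by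
            have : a * conj' d = 0 := by simpa [hc] using h02
            rcases mul_eq_zero.mp this with h' | h'
            · exact absurd h' ha
            · simpa using h'
          -- A + B = 1, A + E = 1, B + F = 1, E + F + G = 1 ⇒ G = 0
          rw [hc] at r00 r33
          rw [hd] at r11 r22
          simp only [Complex.normSq_zero, add_zero, zero_add] at r00 r11 r22 r33
          have hG : Complex.normSq g = 0 := by
            have hBE : Complex.normSq b = Complex.normSq e := by linarith
            linarith
          exact Complex.normSq_eq_zero.mp hG
        · -- all of a, b, c, f nonzero; then d, e nonzero as well
          have hA := Complex.normSq_pos.mpr ha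
          have hB := Complex.normSq_pos.mpr hb
          have hC := Complex.normSq_pos.mpr hc
          have hF := Complex.normSq_pos.mpr hf
          have hD : 0 < Complex.normSq d := by
            rcases lt_or_eq_of_le (nn d) with h' | h'
            · exact h'
            · exfalso
              have : Complex.normSq a * Complex.normSq d = 0 := by rw [← h']; ring
              rw [mAD] at this
              rcases mul_eq_zero.mp this with h'' | h''
              · exact absurd h'' (ne_of_gt hC)
              · exact absurd h'' (ne_of_gt hF)
          have hE : 0 < Complex.normSq e := by
            rcases lt_or_eq_of_le (nn e) with h' | h'
            · exact h'
            · exfalso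
              have : Complex.normSq e * Complex.normSq f = 0 := by rw [← h']; ring
              rw [← mAB] at this
              rcases mul_eq_zero.mp this with h'' | h''
              · exact absurd h'' (ne_of_gt hA)
              · exact absurd h'' (ne_of_gt hB)
          -- A = F, B = E, C = D
          have hAF : Complex.normSq a = Complex.normSq f := by
            nlinarith [mAD, mAB, mBD, hA, hB, hC, hD, hE, hF]
          have hCD : Complex.normSq c = Complex.normSq d := by
            nlinarith [mAD, hA, hF]
          have hG : Complex.normSq g = 0 := by linarith
          exact Complex.normSq_eq_zero.mp hG

/-- If an orthonormal basis of ℂ² ⊗ ℂ² has three product vectors, the fourth is also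
a product vector. -/
theorem stmt13 (v : Fin 4 → TwoQubit) (hon : Orthonormal ℂ v)
    (hspan : Submodule.span ℂ (Set.range v) = ⊤)
    (h0 : IsProductVec (v 0)) (h1 : IsProductVec (v 1)) (h2 : IsProductVec (v 2)) :
    IsProductVec (v 3) := by
  have hsp : ⊤ ≤ Submodule.span ℂ (Set.range v) := hspan.ge
  have horth : ∀ i j, (inner ℂ (v i) (v j) : ℂ) = if i = j then 1 else 0 :=
    orthonormal_iff_ite.mp hon
  set s : Fin 4 → Fin 4 → ℂ := fun i j => (inner ℂ (Jmap (v i)) (v j) : ℂ) with hs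
  have hU : ∀ i k : Fin 4, ∑ j, s i j * conj' (s k j) = if k = i then 1 else 0 := by
    intro i k
    have h1 : ∑ j, (inner ℂ (Jmap (v i)) ((OrthonormalBasis.mk hon hsp) j) : ℂ)
        * inner ℂ ((OrthonormalBasis.mk hon hsp) j) (Jmap (v k))
        = inner ℂ (Jmap (v i)) (Jmap (v k)) :=
      (OrthonormalBasis.mk hon hsp).sum_inner_mul_inner _ _
    rw [OrthonormalBasis.coe_mk, inner_J_J, horth k i] at h1
    calc ∑ j, s i j * conj' (s k j)
        = ∑ j, (inner ℂ (Jmap (v i)) (v j) : ℂ) * inner ℂ (v j) (Jmap (v k)) := by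
          refine Finset.sum_congr rfl fun j _ => ?_
          rw [hs]
          rw [inner_conj_symm (v j) (Jmap (v k))]
      _ = if k = i then 1 else 0 := h1
  have sy : ∀ p q, s p q = s q p := fun p q => J_symm (v p) (v q)
  have cy : ∀ p q, conj' (s p q) = conj' (s q p) := fun p q => congrArg _ (sy p q)
  have hdiag : ∀ i, IsProductVec (v i) → s i i = 0 := by
    rintro i ⟨u, w, huw⟩
    show (inner ℂ (Jmap (v i)) (v i) : ℂ) = 0
    rw [inner_J_left]
    simp only [huw]
    ring
  have e00 := hdiag 0 h0
  have e11 := hdiag 1 h1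
  have e22 := hdiag 2 h2
  have ce11 : conj' (s 1 1) = 0 := by rw [e11]; simp
  have ce22 : conj' (s 2 2) = 0 := by rw [e22]; simp
  have E : ∀ i k : Fin 4, s i 0 * conj' (s k 0) + s i 1 * conj' (s k 1)
      + s i 2 * conj' (s k 2) + s i 3 * conj' (s k 3) = if k = i then 1 else 0 := by
    intro i k
    have h := hU i k
    rwa [Fin.sum_univ_four] at h
  have E00 := E 0 0; have E01 := E 0 1; have E02 := E 0 2; have E03 := E 0 3
  have E11 := E 1 1; have E12 := E 1 2; have E13 := E 1 3
  have E22 := E 2 2; have E23 := E 2 3; have E33 := E 3 3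
  rw [if_pos rfl] at E00 E11 E22 E33
  rw [if_neg (show ¬(1:Fin 4) = 0 by decide)] at E01
  rw [if_neg (show ¬(2:Fin 4) = 0 by decide)] at E02
  rw [if_neg (show ¬(3:Fin 4) = 0 by decide)] at E03
  rw [if_neg (show ¬(2:Fin 4) = 1 by decide)] at E12
  rw [if_neg (show ¬(3:Fin 4) = 1 by decide)] at E13
  rw [if_neg (show ¬(3:Fin 4) = 2 by decide)] at E23
  have hg : s 3 3 = 0 := by
    refine key_alg (s 0 1) (s 0 2) (s 0 3) (s 1 2) (s 1 3) (s 2 3) (s 3 3)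
      ?_ ?_ ?_ ?_ ?_ ?_ ?_ ?_ ?_ ?_
    · linear_combination E00 - conj' (s 0 0) * e00
    · linear_combination E01 - conj' (s 1 0) * e00 - s 0 1 * ce11
    · linear_combination E02 - conj' (s 2 0) * e00 - s 0 2 * ce22 - s 0 1 * cy 2 1
    · linear_combination E03 - conj' (s 3 0) * e00 - s 0 1 * cy 3 1 - s 0 2 * cy 3 2
    · linear_combination E11 - conj' (s 1 0) * sy 1 0 - s 0 1 * cy 1 0 - conj' (s 1 1) * e11
    · linear_combination E12 - conj' (s 2 0) * sy 1 0 - s 0 1 * cy 2 0 - conj' (s 2 1) * e11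
        - s 1 2 * ce22
    · linear_combination E13 - conj' (s 3 0) * sy 1 0 - s 0 1 * cy 3 0 - conj' (s 3 1) * e11
        - s 1 2 * cy 3 2
    · linear_combination E22 - conj' (s 2 0) * sy 2 0 - s 0 2 * cy 2 0 - conj' (s 2 1) * sy 2 1
        - s 1 2 * cy 2 1 - conj' (s 2 2) * e22
    · linear_combination E23 - conj' (s 3 0) * sy 2 0 - s 0 2 * cy 3 0 - conj' (s 3 1) * sy 2 1
        - s 1 2 * cy 3 1 - conj' (s 3 2) * e22
    · linear_combination E33 - conj' (s 3 0) * sy 3 0 - s 0 3 * cy 3 0 - conj' (s 3 1) * sy 3 1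
        - s 1 3 * cy 3 1 - conj' (s 3 2) * sy 3 2 - s 2 3 * cy 3 2
  have hg' : (inner ℂ (Jmap (v 3)) (v 3) : ℂ) = 0 := hg
  rw [inner_J_left] at hg'
  exact isProductVec_of_det _ (by linear_combination (1/2 : ℂ) * hg')
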